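/- Define fe_g^{(2c)} and fo_g^{(2c)} by: fe_1^{(2c)} = d - c, fo_1^{(2c)} = 0, and the joint recursion fe_{g+1}^{(2c)} = sum_{a=0}^{d-1} (fe_g^{(2a)} beta(a,c) + fo_g^{(2a)} eta(a,c)), fo_{g+1}^{(2c)} = sum_{a=0}^{d-1} (fo_g^{(2a)} beta(a,c) + fe_g^{(2a)} eta(a,c)), where for a >= c: beta(a,c) = (c+1)(d-a), eta(a,c) = c(d-a), and for a < c: beta(a,c) = (a+1)(d-c), eta(a,c) = a(d-c). Then with p = 2d+1: fe_2^{(2c)} = ((c+1)p^3 - (3c^2+3c)p^2 + (2c^3 - 3c - 1)p + 2c^3 + 3c^2 + c)/24 and fo_2^{(2c)} = (c p^3 - (3c^2+3c)p^2 + (2c^3+6c^2+3c)p - (2c^3+3c^2+c))/24. -/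

import Mathlib

/-- `feo d g c = (fe_{g+1}^{(2c)}, fo_{g+1}^{(2c)})` (genus index offset by one):
`fe_1^{(2c)} = d - c`, `fo_1^{(2c)} = 0`, and
`fe_{g+1}^{(2c)} = ∑_{a=0}^{d-1} (fe_g^{(2a)} β(a,c) + fo_g^{(2a)} η(a,c))`,
`fo_{g+1}^{(2c)} = ∑_{a=0}^{d-1} (fo_g^{(2a)} β(a,c) + fe_g^{(2a)} η(a,c))`,
where `β(a,c) = (min a c + 1)(d - max a c)` and `η(a,c) = (min a c)(d - max a c)`. -/
def feo (d : ℕ) : ℕ → ℕ → ℚ × ℚ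
  | 0, c => ((d : ℚ) - c, 0)
  | g + 1, c =>
      (∑ a ∈ Finset.range d,
          ((feo d g a).1 * (((min a c : ℕ) : ℚ) + 1) * ((d : ℚ) - (max a c : ℕ))
            + (feo d g a).2 * ((min a c : ℕ) : ℚ) * ((d : ℚ) - (max a c : ℕ))),
       ∑ a ∈ Finset.range d,
          ((feo d g a).2 * (((min a c : ℕ) : ℚ) + 1) * ((d : ℚ) - (max a c : ℕ))
            + (feo d g a).1 * ((min a c : ℕ) : ℚ) * ((d : ℚ) - (max a c : ℕ))))

lemma key_sum (n : ℕ) (x y z : ℚ) :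
    ∑ a ∈ Finset.range n, (x + y * (a : ℚ) + z * (a : ℚ) ^ 2)
      = x * n + y * ((n : ℚ) * (n - 1) / 2) + z * ((n : ℚ) * (n - 1) * (2 * n - 1) / 6) := by
  induction n with
  | zero => simp
  | succ n ih =>
      rw [Finset.sum_range_succ, ih]
      push_cast
      ring

/-- Genus-two formulas for `fe_2^{(2c)}` and `fo_2^{(2c)}` with `p = 2d+1`. -/
theorem genus_two_dims (d c : ℕ) (hd : 1 ≤ d) (hc : c < d) (p : ℚ) (hp : p = 2 * d + 1) :
    (feo d 1 c).1 = (((c : ℚ) + 1) * p ^ 3 - (3 * (c : ℚ) ^ 2 + 3 * c) * p ^ 2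
        + (2 * (c : ℚ) ^ 3 - 3 * c - 1) * p + 2 * (c : ℚ) ^ 3 + 3 * (c : ℚ) ^ 2 + c) / 24 ∧
    (feo d 1 c).2 = ((c : ℚ) * p ^ 3 - (3 * (c : ℚ) ^ 2 + 3 * c) * p ^ 2
        + (2 * (c : ℚ) ^ 3 + 6 * (c : ℚ) ^ 2 + 3 * c) * p
        - (2 * (c : ℚ) ^ 3 + 3 * (c : ℚ) ^ 2 + c)) / 24 := by
  subst hp
  have hc1 : c + 1 ≤ d := hc
  have split : ∀ f : ℕ → ℚ, ∑ a ∈ Finset.range d, f a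
      = ∑ a ∈ Finset.range (c + 1), f a + ∑ a ∈ Finset.Ico (c + 1) d, f a := by
    intro f
    rw [Finset.range_eq_Ico, ← Finset.sum_Ico_consecutive f (Nat.zero_le (c + 1)) hc1]
    rw [Finset.range_eq_Ico]
  constructor
  · show (∑ a ∈ Finset.range d,
        (((d : ℚ) - a) * (((min a c : ℕ) : ℚ) + 1) * ((d : ℚ) - (max a c : ℕ))
          + 0 * ((min a c : ℕ) : ℚ) * ((d : ℚ) - (max a c : ℕ)))) = _
    rw [split]
    have h1 : ∑ a ∈ Finset.range (c + 1),
        (((d : ℚ) - a) * (((min a c : ℕ) : ℚ) + 1) * ((d : ℚ) - (max a c : ℕ))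
          + 0 * ((min a c : ℕ) : ℚ) * ((d : ℚ) - (max a c : ℕ)))
        = ∑ a ∈ Finset.range (c + 1),
          (((d : ℚ) - c) * d + ((d : ℚ) - c) * ((d : ℚ) - 1) * a + (-((d : ℚ) - c)) * (a : ℚ) ^ 2) := by
      refine Finset.sum_congr rfl fun a ha => ?_
      have ha' : a ≤ c := Nat.lt_succ_iff.mp (Finset.mem_range.mp ha)
      rw [min_eq_left ha', max_eq_right ha']
      ring
    have h2 : ∀ a ∈ Finset.Ico (c + 1) d,
        (((d : ℚ) - a) * (((min a c : ℕ) : ℚ) + 1) * ((d : ℚ) - (max a c : ℕ))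
          + 0 * ((min a c : ℕ) : ℚ) * ((d : ℚ) - (max a c : ℕ)))
        = (((c : ℚ) + 1) * (d : ℚ) ^ 2 + (-(2 * ((c : ℚ) + 1) * d)) * a + ((c : ℚ) + 1) * (a : ℚ) ^ 2) := by
      intro a ha
      have ha' : c ≤ a := Nat.le_of_succ_le (Finset.mem_Ico.mp ha).1
      rw [min_eq_right ha', max_eq_left ha']
      ring
    rw [h1, key_sum, Finset.sum_congr rfl h2,
      Finset.sum_Ico_eq_sub _ hc1, key_sum, key_sum]
    push_cast
    ring
  · show (∑ a ∈ Finset.range d,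
        (0 * (((min a c : ℕ) : ℚ) + 1) * ((d : ℚ) - (max a c : ℕ))
          + ((d : ℚ) - a) * ((min a c : ℕ) : ℚ) * ((d : ℚ) - (max a c : ℕ)))) = _
    rw [split]
    have h1 : ∑ a ∈ Finset.range (c + 1),
        (0 * (((min a c : ℕ) : ℚ) + 1) * ((d : ℚ) - (max a c : ℕ))
          + ((d : ℚ) - a) * ((min a c : ℕ) : ℚ) * ((d : ℚ) - (max a c : ℕ)))
        = ∑ a ∈ Finset.range (c + 1),
          ((0 : ℚ) + ((d : ℚ) - c) * (d : ℚ) * a + (-((d : ℚ) - c)) * (a : ℚ) ^ 2) := by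
      refine Finset.sum_congr rfl fun a ha => ?_
      have ha' : a ≤ c := Nat.lt_succ_iff.mp (Finset.mem_range.mp ha)
      rw [min_eq_left ha', max_eq_right ha']
      ring
    have h2 : ∀ a ∈ Finset.Ico (c + 1) d,
        (0 * (((min a c : ℕ) : ℚ) + 1) * ((d : ℚ) - (max a c : ℕ))
          + ((d : ℚ) - a) * ((min a c : ℕ) : ℚ) * ((d : ℚ) - (max a c : ℕ)))
        = ((c : ℚ) * (d : ℚ) ^ 2 + (-(2 * (c : ℚ) * d)) * a + (c : ℚ) * (a : ℚ) ^ 2) := by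
      intro a ha
      have ha' : c ≤ a := Nat.le_of_succ_le (Finset.mem_Ico.mp ha).1
      rw [min_eq_right ha', max_eq_left ha']
      ring
    rw [h1, key_sum, Finset.sum_congr rfl h2,
      Finset.sum_Ico_eq_sub _ hc1, key_sum, key_sum]
    push_cast
    ring
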